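/- For every k ≥ 2 and r ≥ 1, if T is a finite rooted tree in which the root has at most k children and every non-root vertex has at most k−1 children, and every leaf has depth at most r, then Σ over leaves w of (k−1)^{r−depth(w)} ≤ k·(k−1)^{r−1}. -/

import Mathlib

/-- In a finite rooted tree (given by a parent function and consistent depth function)
where the root has at most `k` children, every non-root vertex has at most `k - 1`
children, and every leaf has depth at most `r`, the sum over leaves `w` of
`(k-1)^(r - depth w)` is at most `k * (k-1)^(r-1)`. -/
theorem tree_leaf_weight_bound (k r : ℕ) (hk : 2 ≤ k) (hr : 1 ≤ r)
    (T : Type*) [Fintype T] (root : T) (parent : T → T) (depth : T → ℕ)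
    (hdepth_root : depth root = 0)
    (hparent_root : parent root = root)
    (hdepth_parent : ∀ x, x ≠ root → depth x = depth (parent x) + 1)
    (hroot_children : {y | y ≠ root ∧ parent y = root}.ncard ≤ k)
    (hchildren : ∀ x, x ≠ root → {y | y ≠ root ∧ parent y = x}.ncard ≤ k - 1)
    (hleaf_depth : ∀ w, {y | y ≠ root ∧ parent y = w} = ∅ → depth w ≤ r) :
    (∑ᶠ w ∈ {w : T | {y | y ≠ root ∧ parent y = w} = ∅}, (k - 1) ^ (r - depth w)) ≤
      k * (k - 1) ^ (r - 1) := by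
  classical
  -- only the root has depth 0
  have hzero : ∀ x : T, depth x = 0 → x = root := by
    intro x hx
    by_contra h
    have := hdepth_parent x h
    omega
  -- all depths are at most r
  have hdle : ∀ x : T, depth x ≤ r := by
    by_contra h
    push_neg at h
    obtain ⟨y, hy⟩ := h
    obtain ⟨x, -, hx⟩ := Finset.exists_max_image (Finset.univ : Finset T) depth
      ⟨y, Finset.mem_univ y⟩
    have hxr : r < depth x := lt_of_lt_of_le hy (hx y (Finset.mem_univ y))
    have hleafx : {z | z ≠ root ∧ parent z = x} = ∅ := by
      ext z
      simp only [Set.mem_setOf_eq, Set.mem_empty_iff_false, iff_false, not_and]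
      intro hz hpz
      have h1 := hdepth_parent z hz
      rw [hpz] at h1
      have h2 := hx z (Finset.mem_univ z)
      omega
    exact absurd (hleaf_depth x hleafx) (by omega)
  -- leaf predicate
  set P : T → Prop := fun w => {y | y ≠ root ∧ parent y = w} = ∅ with hP
  -- child-count bounds as Finset cards
  have hncard : ∀ w : T, {y | y ≠ root ∧ parent y = w}.ncard =
      (Finset.univ.filter (fun y => y ≠ root ∧ parent y = w)).card := by
    intro w
    rw [Set.ncard_eq_toFinset_card']
    congr 1
    ext y
    simp
  -- nonleaf w has a child
  have hnonleaf : ∀ w : T, ¬ P w → ∃ y, y ≠ root ∧ parent y = w := by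
    intro w hw
    rw [hP] at hw
    simpa [Set.eq_empty_iff_forall_notMem, not_forall] using hw
  -- the level sets and leaf sets
  set Lf : ℕ → Finset T := fun d => Finset.univ.filter (fun w => P w ∧ depth w ≤ d) with hLf
  set NL : ℕ → Finset T := fun d =>
    Finset.univ.filter (fun v => ¬ P v ∧ depth v = d) with hNL
  set V : ℕ → Finset T := fun d => Finset.univ.filter (fun v => depth v = d) with hV
  -- vertices at depth d+1 are children of nonleaves at depth d
  have hVcard : ∀ d : ℕ, 1 ≤ d → (V (d+1)).card ≤ (k-1) * (NL d).card := by
    intro d hd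
    calc (V (d+1)).card ≤ (k-1) * ((V (d+1)).image parent).card := by
          apply Finset.card_le_mul_card_image
          intro b hb
          obtain ⟨a, ha, hab⟩ := Finset.mem_image.mp hb
          have hadep : depth a = d + 1 := by
            simpa [hV] using ha
          have haroot : a ≠ root := by
            intro h; rw [h] at hadep; omega
          have hbdep : depth b = d := by
            have := hdepth_parent a haroot
            rw [hab] at this; omega
          have hbroot : b ≠ root := by
            intro h; rw [h] at hbdep; rw [hdepth_root] at hbdep; omega
          calc (Finset.filter (fun a => parent a = b) (V (d+1))).card
              ≤ (Finset.univ.filter (fun y => y ≠ root ∧ parent y = b)).card := by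
                apply Finset.card_le_card
                intro z hz
                simp only [Finset.mem_filter, Finset.mem_univ, true_and] at hz ⊢
                refine ⟨?_, hz.2⟩
                intro h
                have : depth z = d + 1 := by simpa [hV] using hz.1
                rw [h, hdepth_root] at this; omega
            _ ≤ k - 1 := by rw [← hncard]; exact hchildren b hbroot
      _ ≤ (k-1) * (NL d).card := by
          apply Nat.mul_le_mul_left
          apply Finset.card_le_card
          intro b hb
          obtain ⟨a, ha, hab⟩ := Finset.mem_image.mp hb
          have hadep : depth a = d + 1 := by simpa [hV] using ha
          have haroot : a ≠ root := by intro h; rw [h] at hadep; omega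
          have hbdep : depth b = d := by
            have := hdepth_parent a haroot
            rw [hab] at this; omega
          simp only [hNL, Finset.mem_filter, Finset.mem_univ, true_and]
          refine ⟨?_, hbdep⟩
          intro hPb
          rw [hP] at hPb
          have : a ∈ ({y | y ≠ root ∧ parent y = b} : Set T) := ⟨haroot, hab⟩
          rw [hPb] at this
          exact this
  -- splitting of levels
  have hsplit : ∀ d : ℕ,
      (Finset.univ.filter (fun w => P w ∧ depth w = d)).card + (NL d).card = (V d).card := by
    intro d
    simp only [hNL, hV]
    have h1 : Finset.univ.filter (fun w => P w ∧ depth w = d)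
        = (Finset.univ.filter (fun v => depth v = d)).filter P := by
      rw [Finset.filter_filter]
      apply Finset.filter_congr
      intro x _
      exact and_comm
    have h2 : Finset.univ.filter (fun v => ¬ P v ∧ depth v = d)
        = (Finset.univ.filter (fun v => depth v = d)).filter (fun v => ¬ P v) := by
      rw [Finset.filter_filter]
      apply Finset.filter_congr
      intro x _
      exact and_comm
    rw [h1, h2]
    exact Finset.card_filter_add_card_filter_not P
  -- split Lf (d+1)
  have hLfsplit : ∀ d : ℕ,
      (∑ w ∈ Lf (d+1), (k-1)^(r - depth w))
        = (∑ w ∈ Lf d, (k-1)^(r - depth w))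
          + (Finset.univ.filter (fun w => P w ∧ depth w = d+1)).card * (k-1)^(r-(d+1)) := by
    intro d
    have hunion : Lf (d+1) = Lf d ∪ Finset.univ.filter (fun w => P w ∧ depth w = d+1) := by
      ext w
      simp only [hLf, Finset.mem_union, Finset.mem_filter, Finset.mem_univ, true_and]
      constructor
      · rintro ⟨h1, h2⟩
        rcases Nat.lt_or_ge (depth w) (d+1) with h | h
        · exact Or.inl ⟨h1, by omega⟩
        · exact Or.inr ⟨h1, by omega⟩
      · rintro (⟨h1, h2⟩ | ⟨h1, h2⟩) <;> exact ⟨h1, by omega⟩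
    have hdisj : Disjoint (Lf d) (Finset.univ.filter (fun w => P w ∧ depth w = d+1)) := by
      rw [Finset.disjoint_left]
      intro w hw hw'
      simp only [hLf, Finset.mem_filter, Finset.mem_univ, true_and] at hw hw'
      omega
    rw [hunion, Finset.sum_union hdisj]
    congr 1
    rw [Finset.sum_congr rfl (fun w hw => ?_), Finset.sum_const, smul_eq_mul]
    have : depth w = d + 1 := by
      simp only [Finset.mem_filter, Finset.mem_univ, true_and] at hw
      exact hw.2
    rw [this]
  -- the potential function
  set f : ℕ → ℕ := fun d =>
    (∑ w ∈ Lf d, (k-1)^(r - depth w)) + (NL d).card * (k-1)^(r-d) with hf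
  -- monotone step
  have hstep : ∀ d : ℕ, 1 ≤ d → d + 1 ≤ r → f (d+1) ≤ f d := by
    intro d hd hdr
    rw [hf]
    simp only
    rw [hLfsplit d, add_assoc, ← add_mul]
    have hpow : (k-1)^(r-d) = (k-1) * (k-1)^(r-(d+1)) := by
      rw [← pow_succ']
      congr 1
      omega
    apply Nat.add_le_add_left
    calc ((Finset.univ.filter (fun w => P w ∧ depth w = d+1)).card + (NL (d+1)).card)
          * (k-1)^(r-(d+1))
        = (V (d+1)).card * (k-1)^(r-(d+1)) := by rw [hsplit (d+1)]
      _ ≤ ((k-1) * (NL d).card) * (k-1)^(r-(d+1)) :=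
          Nat.mul_le_mul_right _ (hVcard d hd)
      _ = (NL d).card * (k-1)^(r-d) := by rw [hpow]; ring
  -- base case
  have hbase : f 1 ≤ k * (k-1)^(r-1) := by
    have hVroot : V 1 ⊆ Finset.univ.filter (fun y => y ≠ root ∧ parent y = root) := by
      intro v hv
      have hvd : depth v = 1 := by simpa [hV] using hv
      have hvroot : v ≠ root := by intro h; rw [h, hdepth_root] at hvd; omega
      have hpv : parent v = root := by
        apply hzero
        have := hdepth_parent v hvroot
        omega
      simp [hvroot, hpv]
    have hV1k : (V 1).card ≤ k := by
      calc (V 1).card ≤ (Finset.univ.filter (fun y => y ≠ root ∧ parent y = root)).card :=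
            Finset.card_le_card hVroot
        _ ≤ k := by rw [← hncard]; exact hroot_children
    by_cases hroot : P root
    · -- root is a leaf: then V 1 = ∅ and Lf 1 ⊆ {root}
      have hV1 : V 1 = ∅ := by
        rw [Finset.eq_empty_iff_forall_notMem]
        intro v hv
        have hmem := hVroot hv
        simp only [Finset.mem_filter, Finset.mem_univ, true_and] at hmem
        rw [hP] at hroot
        have : v ∈ ({y | y ≠ root ∧ parent y = root} : Set T) := hmem
        rw [hroot] at this
        exact this
      have hLf1 : Lf 1 ⊆ {root} := by
        intro w hw
        simp only [hLf, Finset.mem_filter, Finset.mem_univ, true_and] at hw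
        have : depth w = 0 := by
          rcases Nat.lt_or_ge (depth w) 1 with h | h
          · omega
          · exfalso
            have hw1 : depth w = 1 := by omega
            have : w ∈ V 1 := by simp [hV, hw1]
            rw [hV1] at this
            exact absurd this (Finset.notMem_empty w)
        simp [hzero w this]
      have hNL1 : NL 1 ⊆ V 1 := by
        intro v hv
        simp only [hNL, Finset.mem_filter, Finset.mem_univ, true_and] at hv
        simp [hV, hv.2]
      rw [hf]
      simp only
      have h1 : (∑ w ∈ Lf 1, (k-1)^(r - depth w)) ≤ (k-1)^r := by
        calc (∑ w ∈ Lf 1, (k-1)^(r - depth w)) ≤ ∑ w ∈ {root}, (k-1)^(r - depth w) := by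
              apply Finset.sum_le_sum_of_subset hLf1
          _ = (k-1)^r := by rw [Finset.sum_singleton, hdepth_root, Nat.sub_zero]
      have h2 : (NL 1).card = 0 := by
        rw [Finset.card_eq_zero]
        rw [← Finset.subset_empty, ← hV1]
        exact hNL1
      rw [h2, zero_mul, add_zero]
      calc (∑ w ∈ Lf 1, (k-1)^(r - depth w)) ≤ (k-1)^r := h1
        _ = (k-1) * (k-1)^(r-1) := by rw [← pow_succ']; congr 1; omega
        _ ≤ k * (k-1)^(r-1) := Nat.mul_le_mul_right _ (by omega)
    · -- root is not a leaf: Lf 1 consists of depth-1 leaves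
      have hLf1 : Lf 1 = Finset.univ.filter (fun w => P w ∧ depth w = 1) := by
        ext w
        simp only [hLf, Finset.mem_filter, Finset.mem_univ, true_and]
        constructor
        · rintro ⟨h1, h2⟩
          refine ⟨h1, ?_⟩
          rcases Nat.lt_or_ge (depth w) 1 with h | h
          · exfalso
            have : w = root := hzero w (by omega)
            rw [this] at h1
            exact hroot h1
          · omega
        · rintro ⟨h1, h2⟩; exact ⟨h1, by omega⟩
      rw [hf]
      simp only
      rw [hLf1]
      have hsum : (∑ w ∈ Finset.univ.filter (fun w => P w ∧ depth w = 1), (k-1)^(r - depth w))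
          = (Finset.univ.filter (fun w => P w ∧ depth w = 1)).card * (k-1)^(r-1) := by
        rw [Finset.sum_congr rfl (fun w hw => ?_), Finset.sum_const, smul_eq_mul]
        have : depth w = 1 := by
          simp only [Finset.mem_filter, Finset.mem_univ, true_and] at hw
          exact hw.2
        rw [this]
      rw [hsum, ← add_mul, hsplit 1]
      exact Nat.mul_le_mul_right _ hV1k
  -- combine by induction
  have hind : ∀ d : ℕ, 1 ≤ d → d ≤ r → f d ≤ k * (k-1)^(r-1) := by
    intro d hd
    induction d, hd using Nat.le_induction with
    | base => intro _; exact hbase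
    | succ d hd ih =>
        intro hdr
        exact le_trans (hstep d hd hdr) (ih (by omega))
  have hfr : f r ≤ k * (k-1)^(r-1) := hind r hr le_rfl
  -- identify f r with the goal sum
  have hNLr : NL r = ∅ := by
    rw [Finset.eq_empty_iff_forall_notMem]
    intro v hv
    simp only [hNL, Finset.mem_filter, Finset.mem_univ, true_and] at hv
    obtain ⟨y, hy, hpy⟩ := hnonleaf v hv.1
    have := hdepth_parent y hy
    rw [hpy, hv.2] at this
    have := hdle y
    omega
  have hLfr : Lf r = Finset.univ.filter P := by
    ext w
    simp only [hLf, Finset.mem_filter, Finset.mem_univ, true_and]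
    exact ⟨fun h => h.1, fun h => ⟨h, hleaf_depth w h⟩⟩
  have hgoal : ({w : T | {y | y ≠ root ∧ parent y = w} = ∅} : Set T)
      = ↑(Finset.univ.filter P) := by
    ext w
    simp [hP]
  rw [hgoal, finsum_mem_coe_finset]
  calc (∑ w ∈ Finset.univ.filter P, (k-1)^(r - depth w)) = f r := by
        rw [hf]
        simp only
        rw [hNLr, hLfr]
        simp
    _ ≤ k * (k-1)^(r-1) := hfr
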